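/- In the ring of formal power series ℚ⟦X⟧, the series T = Σ_{n≥1} (n^{n−1}/n!) X^n satisfies the functional equation T = X · exp(T), where exp(T) = Σ_{k≥0} T^k / k!. Equivalently, the exponential generating function of rooted labelled trees is the compositional inverse of the series x e^{−x} up to the stated sign conventions. -/

import Mathlib

open PowerSeries

/-- The exponential generating function of rooted labelled trees:
`T = Σ_{n ≥ 1} (n^{n−1}/n!) Xⁿ ∈ ℚ⟦X⟧`. -/
noncomputable def rootedTreeEGF : PowerSeries ℚ :=
  PowerSeries.mk fun n => if n = 0 then 0 else (n : ℚ) ^ (n - 1) / (n.factorial : ℚ)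

/-- The exponential `exp f = Σ_{k ≥ 0} f^k / k!` of a power series `f` with zero constant
term: since `f` has zero constant term, the coefficient of `Xⁿ` in `Σ_{k≥0} f^k/k!` receives
contributions only from `k ≤ n`, so it is `Σ_{k=0}^{n} (coeff n (f^k)) / k!`. -/
noncomputable def expOf (f : PowerSeries ℚ) : PowerSeries ℚ :=
  PowerSeries.mk fun n =>
    ∑ k ∈ Finset.range (n + 1), (PowerSeries.coeff n (f ^ k)) / (k.factorial : ℚ)

open Polynomial Finset


lemma natDegree_comp_sub_lt (p : ℚ[X]) (hp : p.natDegree ≠ 0) :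
    (p.comp (Polynomial.X + 1) - p).natDegree < p.natDegree := by
  set q : ℚ[X] := p.comp (Polynomial.X + 1) with hq
  have hX1 : (Polynomial.X + 1 : ℚ[X]).natDegree = 1 := by
    simpa using Polynomial.natDegree_X_add_C (1 : ℚ)
  have hdeg : q.natDegree = p.natDegree := by
    rw [hq, Polynomial.natDegree_comp, hX1, mul_one]
  have hq0 : q ≠ 0 := fun h => hp (by rw [← hdeg, h, Polynomial.natDegree_zero])
  have hp0 : p ≠ 0 := fun h => hp (by rw [h, Polynomial.natDegree_zero])
  have hlc : q.leadingCoeff = p.leadingCoeff := by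
    rw [hq, Polynomial.leadingCoeff_comp (by rw [hX1]; norm_num)]
    have : (Polynomial.X + 1 : ℚ[X]).leadingCoeff = 1 := by
      simpa using Polynomial.leadingCoeff_X_add_C (1 : ℚ)
    rw [this, one_pow, mul_one]
  have hdd : q.degree = p.degree := by
    rw [Polynomial.degree_eq_natDegree hq0, Polynomial.degree_eq_natDegree hp0, hdeg]
  have h := Polynomial.degree_sub_lt hdd hq0 hlc
  rcases eq_or_ne (q - p) 0 with h0 | h0
  · rw [h0, Polynomial.natDegree_zero]; exact Nat.pos_of_ne_zero hp
  · have h' : (q - p).degree < p.degree := hdd ▸ h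
    exact Polynomial.natDegree_lt_natDegree h0 h'

lemma altsum : ∀ (n : ℕ) (p : ℚ[X]), p.natDegree < n →
    ∑ k ∈ range (n + 1), (-1 : ℚ) ^ k * (n.choose k : ℚ) * p.eval (k : ℚ) = 0 := by
  intro n
  induction n with
  | zero => intro p hp; exact absurd hp (Nat.not_lt_zero _)
  | succ n ih =>
    intro p hp
    set q : ℚ[X] := p.comp (Polynomial.X + 1) - p with hqdef
    have hqeval : ∀ k : ℕ, q.eval (k : ℚ) = p.eval ((k : ℚ) + 1) - p.eval (k : ℚ) := by
      intro k
      simp [hqdef, Polynomial.eval_comp]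
    have step : ∑ k ∈ range (n + 2), (-1 : ℚ) ^ k * ((n+1).choose k : ℚ) * p.eval (k : ℚ)
        = -∑ k ∈ range (n + 1), (-1 : ℚ) ^ k * (n.choose k : ℚ) * q.eval (k : ℚ) := by
      rw [Finset.sum_range_succ' (fun k => (-1 : ℚ) ^ k * ((n+1).choose k : ℚ) * p.eval (k : ℚ)) (n+1)]
      have expand : ∀ k ∈ range (n + 1),
          (-1 : ℚ) ^ (k+1) * ((n+1).choose (k+1) : ℚ) * p.eval ((k+1 : ℕ) : ℚ)
          = (-1 : ℚ) ^ (k+1) * (n.choose k : ℚ) * p.eval ((k:ℚ) + 1)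
            + (-1 : ℚ) ^ (k+1) * (n.choose (k+1) : ℚ) * p.eval ((k:ℚ) + 1) := by
        intro k _
        rw [Nat.choose_succ_succ]
        push_cast
        ring
      rw [Finset.sum_congr rfl expand, Finset.sum_add_distrib]
      have h2 : (∑ k ∈ range (n + 1), (-1 : ℚ) ^ (k+1) * (n.choose (k+1) : ℚ) * p.eval ((k:ℚ) + 1))
          + (-1 : ℚ) ^ 0 * ((n+1).choose 0 : ℚ) * p.eval ((0 : ℕ) : ℚ)
          = ∑ k ∈ range (n + 1), (-1 : ℚ) ^ k * (n.choose k : ℚ) * p.eval (k : ℚ) := by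
        have := Finset.sum_range_succ' (fun k => (-1 : ℚ) ^ k * (n.choose k : ℚ) * p.eval (k : ℚ)) (n+1)
        rw [Finset.sum_range_succ] at this
        simp only [Nat.choose_succ_self, Nat.cast_zero, mul_zero, zero_mul, add_zero,
          Nat.choose_zero_right] at this ⊢
        push_cast at this ⊢
        linarith [this]
      rw [add_assoc, h2, ← Finset.sum_add_distrib, ← Finset.sum_neg_distrib]
      apply Finset.sum_congr rfl
      intro k _
      rw [hqeval k]
      push_cast
      ring
    rw [step]
    rcases eq_or_ne p.natDegree 0 with h0 | h0
    · have : q = 0 := by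
        obtain ⟨c, rfl⟩ := Polynomial.natDegree_eq_zero.mp h0
        simp [hqdef]
      simp [this]
    · have hq : q.natDegree < n := lt_of_lt_of_le (natDegree_comp_sub_lt p h0) (Nat.lt_succ_iff.mp hp)
      rw [ih q hq, neg_zero]

lemma abel : ∀ (n : ℕ) (y : ℚ),
    ∑ k ∈ range (n + 1), (n.choose k : ℚ) * ((k : ℚ) + 1) ^ (k - 1) *
      (y + ((n - k : ℕ) : ℚ)) ^ (n - k) = (y + (n : ℚ) + 1) ^ n := by
  intro n
  induction n with
  | zero => intro y; simp
  | succ n ih =>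
    set P : ℚ[X] := ∑ k ∈ range (n + 1 + 1),
      Polynomial.C (((n+1).choose k : ℚ) * ((k : ℚ) + 1) ^ (k - 1)) *
        (Polynomial.X + Polynomial.C (((n + 1 - k : ℕ)) : ℚ)) ^ (n + 1 - k) with hP
    set Q : ℚ[X] := (Polynomial.X + Polynomial.C ((n : ℚ) + 2)) ^ (n + 1) with hQ
    have hevalP : ∀ x : ℚ, P.eval x
        = ∑ k ∈ range (n + 1 + 1), ((n+1).choose k : ℚ) * ((k : ℚ) + 1) ^ (k - 1) *
            (x + ((n + 1 - k : ℕ) : ℚ)) ^ (n + 1 - k) := by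
      intro x
      simp [hP, Polynomial.eval_finset_sum]
    have hdPeval : ∀ x : ℚ, (Polynomial.derivative P).eval x
        = ∑ k ∈ range (n + 1 + 1), (((n+1).choose k : ℚ) * ((k : ℚ) + 1) ^ (k - 1)) *
            (((n + 1 - k : ℕ) : ℚ) * (x + ((n + 1 - k : ℕ) : ℚ)) ^ (n + 1 - k - 1)) := by
      intro x
      rw [hP, Polynomial.derivative_sum, Polynomial.eval_finset_sum]
      apply Finset.sum_congr rfl
      intro k _
      rw [Polynomial.derivative_C_mul, Polynomial.derivative_pow]
      simp
      try ring
    have hdQeval : ∀ x : ℚ, (Polynomial.derivative Q).eval x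
        = ((n : ℚ) + 1) * (x + ((n : ℚ) + 2)) ^ n := by
      intro x
      rw [hQ, Polynomial.derivative_pow]
      simp
      try ring
    have hder : Polynomial.derivative P = Polynomial.derivative Q := by
      apply Polynomial.funext
      intro x
      rw [hdPeval x, hdQeval x, Finset.sum_range_succ]
      have hlast : ((n + 1 - (n+1) : ℕ) : ℚ) = 0 := by norm_num
      rw [hlast]
      simp only [zero_mul, mul_zero, add_zero]
      have hterm : ∀ k ∈ range (n + 1),
          (((n+1).choose k : ℚ) * ((k : ℚ) + 1) ^ (k - 1)) *
            (((n + 1 - k : ℕ) : ℚ) * (x + ((n + 1 - k : ℕ) : ℚ)) ^ (n + 1 - k - 1))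
          = ((n : ℚ) + 1) * ((n.choose k : ℚ) * ((k : ℚ) + 1) ^ (k - 1) *
              ((x + 1) + ((n - k : ℕ) : ℚ)) ^ (n - k)) := by
        intro k hk
        have hk' : k ≤ n := Nat.lt_succ_iff.mp (Finset.mem_range.mp hk)
        have e1 : n + 1 - k - 1 = n - k := by omega
        have e3 : ((n + 1 - k : ℕ) : ℚ) = ((n - k : ℕ) : ℚ) + 1 := by
          rw [show n + 1 - k = (n - k) + 1 from by omega]
          push_cast
          ring
        have e4 : ((n+1).choose k : ℚ) * (((n - k : ℕ) : ℚ) + 1) = ((n : ℚ) + 1) * (n.choose k : ℚ) := by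
          have h := Nat.choose_mul_succ_eq n k
          have h' : ((n.choose k : ℚ)) * ((n : ℚ) + 1) = ((n+1).choose k : ℚ) * ((n + 1 - k : ℕ) : ℚ) := by
            exact_mod_cast h
          rw [e3] at h'
          linarith
        rw [e1, e3, show x + (((n - k : ℕ) : ℚ) + 1) = (x + 1) + ((n - k : ℕ) : ℚ) from by ring]
        calc (((n+1).choose k : ℚ) * ((k : ℚ) + 1) ^ (k - 1)) *
              ((((n - k : ℕ) : ℚ) + 1) * ((x + 1) + ((n - k : ℕ) : ℚ)) ^ (n - k))
            = (((n+1).choose k : ℚ) * (((n - k : ℕ) : ℚ) + 1)) *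
              (((k : ℚ) + 1) ^ (k - 1) * ((x + 1) + ((n - k : ℕ) : ℚ)) ^ (n - k)) := by ring
          _ = (((n : ℚ) + 1) * (n.choose k : ℚ)) *
              (((k : ℚ) + 1) ^ (k - 1) * ((x + 1) + ((n - k : ℕ) : ℚ)) ^ (n - k)) := by rw [e4]
          _ = ((n : ℚ) + 1) * ((n.choose k : ℚ) * ((k : ℚ) + 1) ^ (k - 1) *
              ((x + 1) + ((n - k : ℕ) : ℚ)) ^ (n - k)) := by ring
      rw [Finset.sum_congr rfl hterm, ← Finset.mul_sum, ih (x + 1)]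
      ring_nf
    have hsub : Polynomial.derivative (P - Q) = 0 := by
      rw [Polynomial.derivative_sub, hder, sub_self]
    have hc : P - Q = Polynomial.C ((P - Q).coeff 0) :=
      Polynomial.eq_C_of_derivative_eq_zero hsub
    have heval0 : P.eval (-(n : ℚ) - 2) = 0 := by
      rw [hevalP]
      have hterm : ∀ k ∈ range (n + 1 + 1),
          ((n+1).choose k : ℚ) * ((k : ℚ) + 1) ^ (k - 1) *
            ((-(n : ℚ) - 2) + ((n + 1 - k : ℕ) : ℚ)) ^ (n + 1 - k)
          = (-1 : ℚ) ^ (n + 1) * ((-1 : ℚ) ^ k * (((n+1).choose k : ℚ)) *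
              (((Polynomial.X : ℚ[X]) + 1) ^ n).eval (k : ℚ)) := by
        intro k hk
        have hk' : k ≤ n + 1 := Nat.lt_succ_iff.mp (Finset.mem_range.mp hk)
        have e1 : ((n + 1 - k : ℕ) : ℚ) = ((n : ℚ) + 1) - (k : ℚ) := by
          rw [Nat.cast_sub hk']
          push_cast
          try ring
        rw [e1, show (-(n : ℚ) - 2) + (((n : ℚ) + 1) - (k : ℚ)) = -((k : ℚ) + 1) from by ring]
        have e3 : (-((k : ℚ) + 1)) ^ (n + 1 - k)
            = (-1 : ℚ) ^ (n + 1 - k) * ((k : ℚ) + 1) ^ (n + 1 - k) := by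
          rw [neg_pow]
        have e4 : ((k : ℚ) + 1) ^ (k - 1) * ((k : ℚ) + 1) ^ (n + 1 - k) = ((k : ℚ) + 1) ^ n := by
          rcases Nat.eq_zero_or_pos k with h0 | h0
          · subst h0; norm_num
          · rw [← pow_add, show k - 1 + (n + 1 - k) = n from by omega]
        have h1 : (-1 : ℚ) ^ (n + 1 - k) * (-1 : ℚ) ^ k = (-1 : ℚ) ^ (n + 1) := by
          rw [← pow_add, show n + 1 - k + k = n + 1 from by omega]
        have h2 : (-1 : ℚ) ^ k * (-1 : ℚ) ^ k = 1 := by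
          rw [← pow_add, ← two_mul, pow_mul]
          norm_num
        have e5 : (-1 : ℚ) ^ (n + 1 - k) = (-1 : ℚ) ^ (n + 1) * (-1 : ℚ) ^ k := by
          calc (-1 : ℚ) ^ (n + 1 - k)
              = (-1 : ℚ) ^ (n + 1 - k) * ((-1 : ℚ) ^ k * (-1 : ℚ) ^ k) := by rw [h2, mul_one]
            _ = ((-1 : ℚ) ^ (n + 1 - k) * (-1 : ℚ) ^ k) * (-1 : ℚ) ^ k := by ring
            _ = (-1 : ℚ) ^ (n + 1) * (-1 : ℚ) ^ k := by rw [h1]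
        have e6 : (((Polynomial.X : ℚ[X]) + 1) ^ n).eval (k : ℚ) = ((k : ℚ) + 1) ^ n := by simp
        rw [e3, e5, e6]
        calc ((n+1).choose k : ℚ) * ((k : ℚ) + 1) ^ (k - 1) *
              ((-1 : ℚ) ^ (n + 1) * (-1 : ℚ) ^ k * ((k : ℚ) + 1) ^ (n + 1 - k))
            = (-1 : ℚ) ^ (n + 1) * ((-1 : ℚ) ^ k * (((n+1).choose k : ℚ)) *
              (((k : ℚ) + 1) ^ (k - 1) * ((k : ℚ) + 1) ^ (n + 1 - k))) := by ring
          _ = _ := by rw [e4]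
      rw [Finset.sum_congr rfl hterm, ← Finset.mul_sum]
      have hdeg : (((Polynomial.X : ℚ[X]) + 1) ^ n).natDegree < n + 1 := by
        have h1 : ((Polynomial.X : ℚ[X]) + 1).natDegree = 1 := by
          simpa using Polynomial.natDegree_X_add_C (1 : ℚ)
        rw [Polynomial.natDegree_pow, h1, mul_one]
        omega
      rw [altsum (n + 1) _ hdeg, mul_zero]
    have hevalQ0 : Q.eval (-(n : ℚ) - 2) = 0 := by
      rw [hQ]
      simp only [Polynomial.eval_pow, Polynomial.eval_add, Polynomial.eval_X, Polynomial.eval_C]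
      rw [show (-(n : ℚ) - 2) + ((n : ℚ) + 2) = 0 from by ring]
      simp
    have hPQ : P = Q := by
      have hcc : (P - Q).coeff 0 = 0 := by
        have h := congrArg (Polynomial.eval (-(n : ℚ) - 2)) hc
        rw [Polynomial.eval_sub, heval0, hevalQ0, Polynomial.eval_C] at h
        linarith
      have h0 : P - Q = 0 := by rw [hc, hcc, Polynomial.C_0]
      exact sub_eq_zero.mp h0
    intro y
    have h1 := hevalP y
    rw [hPQ, hQ] at h1
    simp only [Polynomial.eval_pow, Polynomial.eval_add, Polynomial.eval_X, Polynomial.eval_C] at h1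
    rw [← h1]
    push_cast
    ring_nf

lemma coeff_pow_eq_zero {f : PowerSeries ℚ} (hf : PowerSeries.constantCoeff f = 0) {k b : ℕ}
    (h : b < k) : PowerSeries.coeff b (f ^ k) = 0 := by
  have hX : (PowerSeries.X : PowerSeries ℚ) ∣ f := PowerSeries.X_dvd_iff.mpr hf
  have hXk : (PowerSeries.X : PowerSeries ℚ) ^ k ∣ f ^ k := pow_dvd_pow_of_dvd hX k
  exact (PowerSeries.X_pow_dvd_iff.mp hXk) b h

lemma key (f : PowerSeries ℚ) (hf : PowerSeries.constantCoeff f = 0) (m : ℕ) :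
    ((m : ℚ) + 1) * PowerSeries.coeff (m+1) (expOf f)
      = PowerSeries.coeff m (PowerSeries.derivativeFun f * expOf f) := by
  have hpow : ∀ k : ℕ, ((m : ℚ) + 1) * PowerSeries.coeff (m+1) (f ^ k)
      = (k : ℚ) * PowerSeries.coeff m (f ^ (k-1) * PowerSeries.derivativeFun f) := by
    intro k
    have h2 : PowerSeries.derivativeFun (f ^ k)
        = k • ((f ^ (k-1)) • PowerSeries.derivativeFun f) :=
      Derivation.leibniz_pow (D := PowerSeries.derivative ℚ) (a := f) k
    have h1 : PowerSeries.coeff m (PowerSeries.derivativeFun (f ^ k))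
        = PowerSeries.coeff (m+1) (f ^ k) * ((m : ℚ) + 1) := by
      exact PowerSeries.coeff_derivative (f ^ k) m
      try push_cast
      try ring
    rw [mul_comm, ← h1, h2, smul_eq_mul, map_nsmul, nsmul_eq_mul]
  have hL : ((m : ℚ) + 1) * PowerSeries.coeff (m+1) (expOf f)
      = ∑ k ∈ Finset.range (m + 1),
          PowerSeries.coeff m (f ^ k * PowerSeries.derivativeFun f) / (k.factorial : ℚ) := by
    have hc : PowerSeries.coeff (m+1) (expOf f)
        = ∑ k ∈ Finset.range (m + 1 + 1), (PowerSeries.coeff (m+1) (f ^ k)) / (k.factorial : ℚ) := by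
      simp [expOf]
    rw [hc, Finset.mul_sum]
    rw [Finset.sum_range_succ' (fun k => ((m : ℚ) + 1) * ((PowerSeries.coeff (m+1) (f ^ k)) / (k.factorial : ℚ))) (m+1)]
    simp only [pow_zero, Nat.factorial_zero, Nat.cast_one]
    have hzero : ((m : ℚ) + 1) * (PowerSeries.coeff (m+1) (1 : PowerSeries ℚ) / 1) = 0 := by
      rw [PowerSeries.coeff_one]
      simp
    rw [hzero, add_zero]
    apply Finset.sum_congr rfl
    intro k _
    have h3 := hpow (k+1)
    simp only [Nat.add_sub_cancel] at h3
    push_cast at h3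
    have hfac : (((k+1).factorial : ℕ) : ℚ) = ((k : ℚ) + 1) * (k.factorial : ℚ) := by
      rw [Nat.factorial_succ]
      try push_cast
      ring
    rw [hfac]
    have hk1 : ((k : ℚ) + 1) ≠ 0 := by positivity
    have hkf : (k.factorial : ℚ) ≠ 0 := by exact_mod_cast k.factorial_ne_zero
    field_simp
    linear_combination h3
  rw [hL, mul_comm (PowerSeries.derivativeFun f) (expOf f), PowerSeries.coeff_mul,
    Finset.Nat.sum_antidiagonal_eq_sum_range_succ_mk]
  have hswap : ∀ k ∈ Finset.range (m+1),
      PowerSeries.coeff m (f ^ k * PowerSeries.derivativeFun f) / (k.factorial : ℚ)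
      = ∑ j ∈ Finset.range (m+1), (PowerSeries.coeff j (f ^ k) / (k.factorial : ℚ))
          * PowerSeries.coeff (m - j) (PowerSeries.derivativeFun f) := by
    intro k _
    rw [PowerSeries.coeff_mul, Finset.Nat.sum_antidiagonal_eq_sum_range_succ_mk, Finset.sum_div]
    apply Finset.sum_congr rfl
    intro j _
    ring
  rw [Finset.sum_congr rfl hswap, Finset.sum_comm]
  apply Finset.sum_congr rfl
  intro j hj
  rw [← Finset.sum_mul]
  congr 1
  have hjm : j ≤ m := Nat.lt_succ_iff.mp (Finset.mem_range.mp hj)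
  have hc : PowerSeries.coeff j (expOf f)
      = ∑ k ∈ Finset.range (j + 1), (PowerSeries.coeff j (f ^ k)) / (k.factorial : ℚ) := by
    simp [expOf]
  rw [hc]
  symm
  apply Finset.sum_subset
  · intro x hx
    rw [Finset.mem_range] at *
    omega
  · intro x _ hx
    rw [Finset.mem_range, not_lt] at hx
    rw [coeff_pow_eq_zero hf (by omega), zero_div]

lemma pow_div_factorial_succ (s : ℕ) :
    ((s : ℚ) + 1) ^ s / ((s+1).factorial : ℚ) = ((s : ℚ) + 1) ^ (s - 1) / (s.factorial : ℚ) := by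
  rcases s with _ | t
  · norm_num
  · have h1 : (((t+1)+1).factorial : ℚ) = (((t:ℚ)+1)+1) * ((t+1).factorial : ℚ) := by
      rw [Nat.factorial_succ]
      push_cast
      ring
    have h2 : (((t+1) : ℕ) : ℚ) + 1 ≠ 0 := by positivity
    have h3 : (((t+1).factorial : ℕ) : ℚ) ≠ 0 := by exact_mod_cast (t+1).factorial_ne_zero
    rw [h1, Nat.add_sub_cancel, pow_succ]
    push_cast
    field_simp

lemma num (r : ℕ) :
    ∑ j ∈ range (r+1), (((j : ℚ)+1)^(j+1) / ((j+1).factorial : ℚ))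
        * ((((r-j : ℕ) : ℚ)+1)^(r-j) / (((r-j)+1).factorial : ℚ))
      = ((r : ℚ)+1) * (((r : ℚ)+2)^(r+1) / ((r+2).factorial : ℚ)) := by
  have habel := abel r 1
  have hre := Finset.sum_range_reflect
    (fun k => (r.choose k : ℚ) * ((k : ℚ) + 1) ^ (k - 1) * ((1 : ℚ) + ((r - k : ℕ) : ℚ)) ^ (r - k)) (r+1)
  rw [habel] at hre
  -- hre : ∑ j ∈ range (r+1), f (r + 1 - 1 - j) = (1 + ↑r + 1)^r
  have hrf : (r.factorial : ℚ) ≠ 0 := by exact_mod_cast r.factorial_ne_zero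
  have hterm : ∀ j ∈ range (r+1),
      (((j : ℚ)+1)^(j+1) / ((j+1).factorial : ℚ))
        * ((((r-j : ℕ) : ℚ)+1)^(r-j) / (((r-j)+1).factorial : ℚ))
      = ((r.choose (r + 1 - 1 - j) : ℚ) * (((r + 1 - 1 - j : ℕ) : ℚ) + 1) ^ ((r + 1 - 1 - j) - 1)
          * ((1 : ℚ) + ((r - (r + 1 - 1 - j) : ℕ) : ℚ)) ^ (r - (r + 1 - 1 - j))) / (r.factorial : ℚ) := by
    intro j hj
    have hjr : j ≤ r := Nat.lt_succ_iff.mp (Finset.mem_range.mp hj)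
    have e0 : r + 1 - 1 - j = r - j := by omega
    have e1 : r - (r - j) = j := by omega
    rw [e0, e1]
    have hs : r - j ≤ r := Nat.sub_le r j
    have hchoose : (r.choose (r-j) : ℚ) = (r.factorial : ℚ) / (((r-j).factorial : ℚ) * (j.factorial : ℚ)) := by
      rw [Nat.cast_choose ℚ hs]
      congr 2
      rw [show r - (r - j) = j from by omega]
    have hB := pow_div_factorial_succ (r - j)
    have hfj : ((j+1).factorial : ℚ) = ((j : ℚ)+1) * (j.factorial : ℚ) := by
      rw [Nat.factorial_succ]
      push_cast
      ring
    have hjf : (j.factorial : ℚ) ≠ 0 := by exact_mod_cast j.factorial_ne_zero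
    have hsf : ((r-j).factorial : ℚ) ≠ 0 := by exact_mod_cast (r-j).factorial_ne_zero
    have hj1 : ((j : ℚ)+1) ≠ 0 := by positivity
    rw [hB, hchoose, hfj, pow_succ]
    rw [show (1 : ℚ) + ((j : ℕ) : ℚ) = ((j : ℚ) + 1) from by ring]
    field_simp
  rw [Finset.sum_congr rfl hterm, ← Finset.sum_div, hre]
  have hfac : ((r+2).factorial : ℚ) = (((r : ℚ)+2)) * (((r : ℚ)+1)) * (r.factorial : ℚ) := by
    rw [show r + 2 = (r+1)+1 from rfl, Nat.factorial_succ, Nat.factorial_succ]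
    push_cast
    ring
  rw [hfac]
  have h1 : ((r : ℚ)+2) ≠ 0 := by positivity
  have h2 : ((r : ℚ)+1) ≠ 0 := by positivity
  rw [show ((1 : ℚ) + (r : ℚ) + 1) = ((r : ℚ) + 2) from by ring]
  field_simp
  ring

lemma constT : PowerSeries.constantCoeff rootedTreeEGF = 0 := by
  have : PowerSeries.constantCoeff rootedTreeEGF = PowerSeries.coeff 0 rootedTreeEGF := by
    rw [PowerSeries.coeff_zero_eq_constantCoeff]
  rw [this]
  simp [rootedTreeEGF]

lemma coeff_T (j : ℕ) : PowerSeries.coeff (j+1) rootedTreeEGF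
    = ((j : ℚ)+1)^j / ((j+1).factorial : ℚ) := by
  simp only [rootedTreeEGF, PowerSeries.coeff_mk, Nat.succ_ne_zero, if_false, Nat.add_sub_cancel]
  push_cast
  ring

lemma coeff_expT (m : ℕ) : PowerSeries.coeff m (expOf rootedTreeEGF)
    = ((m : ℚ)+1)^m / ((m+1).factorial : ℚ) := by
  induction m using Nat.strong_induction_on with
  | _ m ih =>
    rcases m with _ | r
    · simp [expOf]
    · have hk := key rootedTreeEGF constT r
      rw [PowerSeries.coeff_mul, Finset.Nat.sum_antidiagonal_eq_sum_range_succ_mk] at hk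
      have hterm : ∀ j ∈ range (r+1),
          PowerSeries.coeff j (PowerSeries.derivativeFun rootedTreeEGF)
            * PowerSeries.coeff (r - j) (expOf rootedTreeEGF)
          = (((j : ℚ)+1)^(j+1) / ((j+1).factorial : ℚ))
              * ((((r-j : ℕ) : ℚ)+1)^(r-j) / (((r-j)+1).factorial : ℚ)) := by
        intro j hj
        have hjr : j < r + 1 := Finset.mem_range.mp hj
        rw [show PowerSeries.coeff j (PowerSeries.derivativeFun rootedTreeEGF) = PowerSeries.coeff (j+1) rootedTreeEGF * ((j:ℚ)+1) from PowerSeries.coeff_derivative _ _, coeff_T, ih (r-j) (by omega)]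
        rw [pow_succ]
        push_cast
        ring
      rw [Finset.sum_congr rfl hterm, num r] at hk
      have hr1 : ((r : ℚ)+1) ≠ 0 := by positivity
      have := mul_left_cancel₀ hr1 hk
      rw [this]
      push_cast
      ring_nf

/-- In `ℚ⟦X⟧`, the series `T = Σ_{n≥1} (n^{n−1}/n!) Xⁿ` satisfies the
functional equation `T = X · exp T`. -/
theorem rootedTreeEGF_eq_X_mul_exp :
    rootedTreeEGF = PowerSeries.X * expOf rootedTreeEGF := by
  ext n
  rcases n with _ | m
  · simp [constT]
  · rw [PowerSeries.coeff_succ_X_mul, coeff_T, coeff_expT]
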